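/- If A and B are well-ordered subsets (with respect to a bi-order <) of a bi-ordered group G, then the product set AB = {ab : a ∈ A, b ∈ B} is well-ordered, and for every g ∈ G there are only finitely many pairs (a,b) ∈ A × B with ab = g. -/

import Mathlib

open Pointwise
theorem mul_wellOrdered_of_wellOrdered {G : Type*} [Group G] [LinearOrder G]
    [CovariantClass G G (· * ·) (· < ·)]
    [CovariantClass G G (Function.swap (· * ·)) (· < ·)]
    (A B : Set G) (hA : A.IsWF) (hB : B.IsWF) :
    (A * B).IsWF ∧
      ∀ g : G, {p : G × G | p.1 ∈ A ∧ p.2 ∈ B ∧ p.1 * p.2 = g}.Finite := by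
  haveI : MulLeftMono G := ⟨covariant_le_of_covariant_lt _ _ _ CovariantClass.elim⟩
  haveI : MulRightMono G := ⟨covariant_le_of_covariant_lt _ _ _ CovariantClass.elim⟩
  constructor
  · have hpwo : (A * B).IsPWO := by
      rw [← Set.image_mul_prod]
      exact (hA.isPWO.prod hB.isPWO).image_of_monotone
        (fun p q hpq => mul_le_mul' hpq.1 hpq.2)
    exact hpwo.isWF
  · intro g
    refine Set.not_infinite.1 fun h => ?_
    set s : Set (G × G) := {p : G × G | p.1 ∈ A ∧ p.2 ∈ B ∧ p.1 * p.2 = g}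
    have h1 : s.PartiallyWellOrderedOn (Prod.fst ⁻¹'o (· ≤ ·)) :=
      Set.partiallyWellOrderedOn_iff_exists_lt.2 fun f hf =>
      hA.isPWO.exists_lt (f := Prod.fst ∘ f) fun n => (hf n).1
    have h2 : s.PartiallyWellOrderedOn (Prod.snd ⁻¹'o (· ≤ ·)) :=
      Set.partiallyWellOrderedOn_iff_exists_lt.2 fun f hf =>
      hB.isPWO.exists_lt (f := Prod.snd ∘ f) fun n => (hf n).2.1
    obtain ⟨e, he⟩ :=
      h1.exists_monotone_subseq (f := fun n => (h.natEmbedding _ n : G × G)) fun n => (h.natEmbedding _ n).2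
    obtain ⟨m, n, mn, h2'⟩ := h2.exists_lt (f := fun x => (h.natEmbedding _) (e x)) fun n => (h.natEmbedding _ _).2
    set x : G × G := (h.natEmbedding _ (e m) : G × G)
    set y : G × G := (h.natEmbedding _ (e n) : G × G)
    have hx : x ∈ s := (h.natEmbedding _ (e m)).2
    have hy : y ∈ s := (h.natEmbedding _ (e n)).2
    have h1' : x.1 ≤ y.1 := he m n mn.le
    have heq : x = y := by
      have hfst : x.1 = y.1 := by
        rcases h1'.lt_or_eq with hlt | heq
        · exact absurd (mul_lt_mul_of_lt_of_le hlt h2')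
            (by rw [hx.2.2, hy.2.2]; exact lt_irrefl g)
        · exact heq
      have hsnd : x.2 = y.2 := by
        have := hx.2.2.trans hy.2.2.symm
        rw [hfst] at this
        exact mul_left_cancel this
      exact Prod.ext hfst hsnd
    exact mn.ne (e.injective ((h.natEmbedding _).injective (Subtype.ext heq)))
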